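/- arXiv:2502.03626 — 2 statements merged into one kernel-verified Lean document; each statement's English description precedes it below -/
import Mathlib

section
/- Let G be a profinite group and C a procyclic (topologically cyclic) closed subgroup of G. If H = C^g ∩ C is nontrivial for some g ∈ G (where C^g = g⁻¹Cg), then g normalizes H. -/
open Subgroup

section Cyclic

/-- In a finite cyclic group, subgroups are determined by their cardinality. -/
lemma cyclic_subgroup_eq_of_card_eq {Z : Type*} [Group Z] [Finite Z] [IsCyclic Z]
    (A B : Subgroup Z) (h : Nat.card A = Nat.card B) : A = B := by
  classical
  cases nonempty_fintype Z
  have key : ∀ D : Subgroup Z,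
      (D : Set Z).toFinset = Finset.univ.filter (fun x => x ^ (Nat.card D) = 1) := by
    intro D
    have hpos : 0 < Nat.card D := Nat.card_pos
    apply Finset.eq_of_subset_of_card_le
    · intro x hx
      rw [Set.mem_toFinset] at hx
      refine Finset.mem_filter.2 ⟨Finset.mem_univ x, ?_⟩
      have h1 : (⟨x, hx⟩ : D) ^ (Nat.card D) = 1 := pow_card_eq_one'
      have h2 := congrArg (Subtype.val) h1
      simp only [SubmonoidClass.coe_pow, OneMemClass.coe_one] at h2
      exact h2
    · calc (Finset.univ.filter (fun x : Z => x ^ (Nat.card D) = 1)).card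
          ≤ Nat.card D := IsCyclic.card_pow_eq_one_le hpos
        _ = (D : Set Z).toFinset.card := by
            rw [← SetLike.coe_sort_coe, Nat.card_coe_set_eq, Set.ncard_eq_toFinset_card']
  have hAB : (A : Set Z).toFinset = (B : Set Z).toFinset := by
    rw [key A, key B, h]
  apply SetLike.ext'
  have := congrArg (fun s : Finset Z => (s : Set Z)) hAB
  simpa using this

lemma zpowers_isCyclic {Q : Type*} [Group Q] (q : Q) : IsCyclic (zpowers q) := by
  refine ⟨⟨⟨q, mem_zpowers q⟩, ?_⟩⟩
  rintro ⟨x, hx⟩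
  obtain ⟨k, hk⟩ := hx
  exact ⟨k, Subtype.ext (by simpa using hk)⟩

/-- Subgroups of a cyclic subgroup of a finite group with equal card are equal. -/
lemma subgroup_eq_of_card_eq_of_le_zpowers {Q : Type*} [Group Q] [Finite Q] {q : Q}
    {A B : Subgroup Q} (hA : A ≤ zpowers q) (hB : B ≤ zpowers q)
    (h : Nat.card A = Nat.card B) : A = B := by
  have : IsCyclic (zpowers q) := zpowers_isCyclic q
  have hA' : (A.subgroupOf (zpowers q)).map (zpowers q).subtype = A := by
    rw [subgroupOf_map_subtype, inf_eq_left.2 hA]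
  have hB' : (B.subgroupOf (zpowers q)).map (zpowers q).subtype = B := by
    rw [subgroupOf_map_subtype, inf_eq_left.2 hB]
  have hcard : Nat.card (A.subgroupOf (zpowers q)) = Nat.card (B.subgroupOf (zpowers q)) := by
    rw [Nat.card_congr (subgroupOfEquivOfLe hA).toEquiv,
        Nat.card_congr (subgroupOfEquivOfLe hB).toEquiv, h]
  rw [← hA', ← hB', cyclic_subgroup_eq_of_card_eq _ _ hcard]

end Cyclic

section Profinite

variable {G : Type*} [Group G] [TopologicalSpace G] [IsTopologicalGroup G]
    [CompactSpace G] [TotallyDisconnectedSpace G]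

/-- Profinite separation: membership in a closed subgroup can be detected in
finite (open normal) quotients. -/
lemma mem_closed_of_forall_quot {H : Subgroup G} (hHc : IsClosed (H : Set G)) {x : G}
    (hx : ∀ N : OpenNormalSubgroup G, ∃ h ∈ H, h⁻¹ * x ∈ N.toSubgroup) : x ∈ H := by
  by_contra hxH
  have hScomp : IsCompact ((fun h : G => h⁻¹ * x) '' (H : Set G)) :=
    (hHc.isCompact).image (by fun_prop)
  have hSclosed : IsClosed ((fun h : G => h⁻¹ * x) '' (H : Set G)) := hScomp.isClosed
  have h1 : (1 : G) ∈ ((fun h : G => h⁻¹ * x) '' (H : Set G))ᶜ := by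
    rintro ⟨h, hh, e⟩
    exact hxH ((inv_mul_eq_one.mp e) ▸ hh)
  obtain ⟨W, hW, h1W, hWs⟩ := compact_exists_isClopen_in_isOpen hSclosed.isOpen_compl h1
  obtain ⟨N, hN⟩ := IsTopologicalGroup.exist_openNormalSubgroup_sub_clopen_nhds_of_one hW h1W
  obtain ⟨h, hh, hmem⟩ := hx N
  exact hWs (hN hmem) ⟨h, hh, rfl⟩

end Profinite

section Main

variable {G : Type*} [Group G] [TopologicalSpace G] [IsTopologicalGroup G]
    [CompactSpace G] [TotallyDisconnectedSpace G]

/-- A continuous automorphism maps the procyclic closure of `c` to that of its image. -/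
lemma map_topologicalClosure_zpowers (φ : G ≃* G) (hφ : Continuous φ) (hφs : Continuous φ.symm)
    (c : G) :
    map φ.toMonoidHom ((zpowers c).topologicalClosure) = (zpowers (φ c)).topologicalClosure := by
  let e : G ≃ₜ G := ⟨φ.toEquiv, hφ, hφs⟩
  apply SetLike.ext'
  have h1 : ((map φ.toMonoidHom ((zpowers c).topologicalClosure) : Subgroup G) : Set G)
      = e '' (_root_.closure (zpowers c : Set G)) := by
    rw [coe_map, Subgroup.topologicalClosure_coe]
    rfl
  rw [h1, e.image_closure, Subgroup.topologicalClosure_coe]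
  congr 1
  have : e '' (zpowers c : Set G) = ((map φ.toMonoidHom (zpowers c) : Subgroup G) : Set G) := by
    rw [coe_map]; rfl
  rw [this, MonoidHom.map_zpowers]
  rfl

lemma continuous_mulaut_conj (g : G) : Continuous (MulAut.conj g) := by
  have : (MulAut.conj g : G → G) = fun x => g * x * g⁻¹ := by
    funext x; simp [MulAut.conj_apply]
  rw [this]; fun_prop

lemma continuous_mulaut_conj_symm (g : G) : Continuous (MulAut.conj g).symm := by
  have : ((MulAut.conj g).symm : G → G) = fun x => g⁻¹ * x * g := by
    funext x; simp [MulAut.conj_symm_apply]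
  rw [this]; fun_prop

/-- Key step: if `H` is a closed subgroup of a procyclic closed subgroup `C`
and `gHg⁻¹ ≤ C`, then `gHg⁻¹ ≤ H`. -/
lemma main_step (C : Subgroup G) (c : G)
    (hC : C = (zpowers c).topologicalClosure)
    (g : G) (H : Subgroup G) (hHclosed : IsClosed (H : Set G))
    (hHC : H ≤ C) (hgH : map (MulAut.conj g).toMonoidHom H ≤ C) :
    ∀ x ∈ H, g * x * g⁻¹ ∈ H := by
  intro x hx
  apply mem_closed_of_forall_quot hHclosed
  intro N
  have hfin : Finite (G ⧸ N.toSubgroup) := quotient_finite_of_isOpen _ N.isOpen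
  set f := QuotientGroup.mk' N.toSubgroup with hf
  -- the image of C is cyclic, generated by f c
  have hmapC : map f C = zpowers (f c) := by
    apply le_antisymm
    · rw [hC, map_le_iff_le_comap]
      apply topologicalClosure_minimal
      · intro y hy
        obtain ⟨k, hk⟩ := hy
        exact ⟨k, by rw [← hk]; simp⟩
      · have hopen : IsOpen ((comap f (zpowers (f c)) : Subgroup G) : Set G) := by
          apply Subgroup.isOpen_mono (H₁ := N.toSubgroup) _ N.isOpen
          intro n hn
          simp only [mem_comap]
          have : f n = 1 := (QuotientGroup.eq_one_iff n).2 hn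
          rw [this]; exact one_mem _
        exact (comap f (zpowers (f c))).isClosed_of_isOpen hopen
    · rw [zpowers_le]
      exact mem_map_of_mem f (hC ▸ (zpowers c).le_topologicalClosure (mem_zpowers c))
  -- the conjugate of the image of H by f g equals the image of H
  set K := map (MulAut.conj g).toMonoidHom H with hK
  have hcomp : map f K = map (MulAut.conj (f g)).toMonoidHom (map f H) := by
    rw [hK, map_map, map_map]
    congr 1
  have hHle : map f H ≤ zpowers (f c) := hmapC ▸ map_mono hHC
  have hKle : map f K ≤ zpowers (f c) := hmapC ▸ map_mono hgH
  have hcard : Nat.card (map f K) = Nat.card (map f H) := by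
    rw [hcomp]
    exact Nat.card_congr ((equivMapOfInjective (map f H) _
      (MulAut.conj (f g)).injective).toEquiv.symm)
  have heq : map f K = map f H := subgroup_eq_of_card_eq_of_le_zpowers hKle hHle hcard
  -- conclude
  have hxK : f (g * x * g⁻¹) ∈ map f K := by
    refine mem_map_of_mem f ?_
    exact ⟨x, hx, by simp [MulAut.conj_apply]⟩
  rw [heq] at hxK
  obtain ⟨h, hh, hfh⟩ := hxK
  refine ⟨h, hh, ?_⟩
  have h2 : ((h : G) : G ⧸ N.toSubgroup) = ((g * x * g⁻¹ : G) : G ⧸ N.toSubgroup) := hfh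
  exact (QuotientGroup.eq).1 h2

end Main




/-- Let `G` be a profinite group and `C` a procyclic (topologically cyclic)
closed subgroup of `G`. If `H = C^g ∩ C` is nontrivial for some `g ∈ G`
(where `C^g = g⁻¹Cg`), then `g` normalizes `H`. -/
theorem procyclic_conj_inter_normalizes
    {G : Type*} [Group G] [TopologicalSpace G] [IsTopologicalGroup G]
    [CompactSpace G] [TotallyDisconnectedSpace G]
    (C : Subgroup G) (hCclosed : IsClosed (C : Set G))
    (hCprocyclic : ∃ c : G, C = (Subgroup.zpowers c).topologicalClosure)
    (g : G)
    (H : Subgroup G)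
    (hH : H = Subgroup.map ((MulAut.conj g).symm.toMonoidHom) C ⊓ C)
    (hHnontriv : H ≠ ⊥) :
    g ∈ Subgroup.normalizer (H : Set G) := by
  obtain ⟨c, hC⟩ := hCprocyclic
  set φ := (MulAut.conj g).symm with hφ
  set Cg := Subgroup.map φ.toMonoidHom C with hCgdef
  have hCg : Cg = (zpowers (φ c)).topologicalClosure := by
    rw [hCgdef, hC]
    exact map_topologicalClosure_zpowers φ (continuous_mulaut_conj_symm g)
      (continuous_mulaut_conj g) c
  have hCgclosed : IsClosed (Cg : Set G) := by
    rw [hCg]; exact Subgroup.isClosed_topologicalClosure _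
  have hHclosed : IsClosed (H : Set G) := by
    rw [hH, Subgroup.coe_inf]; exact hCgclosed.inter hCclosed
  have hHCg : H ≤ Cg := hH ▸ inf_le_left
  have hHC : H ≤ C := hH ▸ inf_le_right
  -- conjugation by g maps Cg onto C
  have hmapCg : map (MulAut.conj g).toMonoidHom Cg = C := by
    rw [hCgdef, map_map]
    ext y
    simp only [mem_map, MonoidHom.comp_apply, MulEquiv.coe_toMonoidHom, hφ,
      MulAut.conj_apply, MulAut.conj_symm_apply]
    constructor
    · rintro ⟨x, hxC, rfl⟩
      have hxx : g * (g⁻¹ * x * g) * g⁻¹ = x := by group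
      rwa [hxx]
    · intro hy
      exact ⟨y, hy, by group⟩
  -- conjugation by g⁻¹ maps C onto Cg
  have hmapC : map (MulAut.conj g⁻¹).toMonoidHom C = Cg := by
    rw [hCgdef]
    ext y
    simp [hφ, MulAut.conj_apply, MulAut.conj_symm_apply]
  have S1 : ∀ x ∈ H, g * x * g⁻¹ ∈ H :=
    main_step C c hC g H hHclosed hHC (hmapCg ▸ map_mono hHCg)
  have S2 : ∀ x ∈ H, g⁻¹ * x * g⁻¹⁻¹ ∈ H :=
    main_step Cg (φ c) hCg g⁻¹ H hHclosed hHCg (hmapC ▸ map_mono hHC)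
  rw [Subgroup.mem_normalizer_iff]
  intro h
  constructor
  · exact S1 h
  · intro hgh
    have := S2 _ hgh
    simpa [mul_assoc] using this
end

section
/- The kernel of the natural surjection from the free product G₁ * G₂ onto the direct product G₁ × G₂ is a free group, freely generated by the commutators [g₁, g₂] with g₁ ∈ G₁ \ {1}, g₂ ∈ G₂ \ {1}. -/
open Monoid
open scoped commutatorElement

namespace CartesianAux

variable {G₁ G₂ : Type*} [Group G₁] [Group G₂]

/-- Index set for the free generators: nontrivial pairs. -/
abbrev S (G₁ G₂ : Type*) [Group G₁] [Group G₂] : Type _ :=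
  {p : G₁ × G₂ // p.1 ≠ 1 ∧ p.2 ≠ 1}

open Classical in
/-- The generator associated to a pair, or `1` if either coordinate is trivial. -/
noncomputable def γ (a : G₁) (b : G₂) : FreeGroup (S G₁ G₂) :=
  if h : a ≠ 1 ∧ b ≠ 1 then FreeGroup.of ⟨(a, b), h⟩ else 1

@[simp] lemma γ_one_left (b : G₂) : (γ (1 : G₁) b : FreeGroup (S G₁ G₂)) = 1 := by
  simp [γ]

@[simp] lemma γ_one_right (a : G₁) : (γ a (1 : G₂) : FreeGroup (S G₁ G₂)) = 1 := by
  simp [γ]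

lemma γ_def {a : G₁} {b : G₂} (ha : a ≠ 1) (hb : b ≠ 1) :
    (γ a b : FreeGroup (S G₁ G₂)) = FreeGroup.of ⟨(a, b), ha, hb⟩ := by
  simp [γ, ha, hb]

/-- The canonical map from the free group to the coproduct, sending generators
to commutators. -/
noncomputable def ι : FreeGroup (S G₁ G₂) →* Coprod G₁ G₂ :=
  FreeGroup.lift fun p => ⁅(Coprod.inl p.1.1 : Coprod G₁ G₂), Coprod.inr p.1.2⁆

lemma ι_γ (a : G₁) (b : G₂) :
    ι (γ a b) = ⁅(Coprod.inl a : Coprod G₁ G₂), Coprod.inr b⁆ := by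
  by_cases ha : a = 1
  · subst ha; simp [commutatorElement_one_left]
  by_cases hb : b = 1
  · subst hb; simp [commutatorElement_one_right]
  · rw [γ_def ha hb]; exact FreeGroup.lift_apply_of

/-- Action of `G₁` on the free group (conjugation read through generators). -/
noncomputable def Af (g : G₁) : FreeGroup (S G₁ G₂) →* FreeGroup (S G₁ G₂) :=
  FreeGroup.lift fun p => γ (g * p.1.1) p.1.2 * (γ g p.1.2)⁻¹

/-- Action of `G₂` on the free group. -/
noncomputable def Bf (h : G₂) : FreeGroup (S G₁ G₂) →* FreeGroup (S G₁ G₂) :=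
  FreeGroup.lift fun p => (γ p.1.1 h)⁻¹ * γ p.1.1 (h * p.1.2)

lemma Af_γ (g a : G₁) (b : G₂) :
    Af g (γ a b) = γ (g * a) b * (γ g b)⁻¹ := by
  by_cases ha : a = 1
  · subst ha; simp
  by_cases hb : b = 1
  · subst hb; simp
  · rw [γ_def ha hb]; exact FreeGroup.lift_apply_of

lemma Bf_γ (h : G₂) (a : G₁) (b : G₂) :
    Bf h (γ a b) = (γ a h)⁻¹ * γ a (h * b) := by
  by_cases ha : a = 1
  · subst ha; simp
  by_cases hb : b = 1
  · subst hb; simp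
  · rw [γ_def ha hb]; exact FreeGroup.lift_apply_of

lemma γ_eq_of (p : S G₁ G₂) : γ p.1.1 p.1.2 = FreeGroup.of p := by
  rw [γ_def p.2.1 p.2.2]

lemma Af_of (g : G₁) (p : S G₁ G₂) :
    Af g (FreeGroup.of p) = γ (g * p.1.1) p.1.2 * (γ g p.1.2)⁻¹ :=
  FreeGroup.lift_apply_of

lemma Bf_of (h : G₂) (p : S G₁ G₂) :
    Bf h (FreeGroup.of p) = (γ p.1.1 h)⁻¹ * γ p.1.1 (h * p.1.2) :=
  FreeGroup.lift_apply_of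

lemma Af_one : (Af (1 : G₁) : FreeGroup (S G₁ G₂) →* _) = MonoidHom.id _ := by
  apply FreeGroup.ext_hom
  intro p
  rw [MonoidHom.id_apply, Af_of]
  simp [γ_eq_of]

lemma Af_mul (g g' : G₁) :
    (Af (g * g') : FreeGroup (S G₁ G₂) →* _) = (Af g).comp (Af g') := by
  apply FreeGroup.ext_hom
  intro p
  rw [MonoidHom.comp_apply, Af_of, Af_of, map_mul, map_inv, Af_γ, Af_γ, mul_assoc]
  group

lemma Bf_one : (Bf (1 : G₂) : FreeGroup (S G₁ G₂) →* _) = MonoidHom.id _ := by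
  apply FreeGroup.ext_hom
  intro p
  rw [MonoidHom.id_apply, Bf_of]
  simp [γ_eq_of]

lemma Bf_mul (h h' : G₂) :
    (Bf (h * h') : FreeGroup (S G₁ G₂) →* _) = (Bf h).comp (Bf h') := by
  apply FreeGroup.ext_hom
  intro p
  rw [MonoidHom.comp_apply, Bf_of, Bf_of, map_mul, map_inv, Bf_γ, Bf_γ, ← mul_assoc]
  group

/-- The state space for the Schreier rewriting process. -/
abbrev X (G₁ G₂ : Type*) [Group G₁] [Group G₂] : Type _ :=
  FreeGroup (S G₁ G₂) × G₁ × G₂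

/-- Left action of `G₁` on states. -/
noncomputable def LA : G₁ →* Function.End (X G₁ G₂) where
  toFun a := fun s => (Af a s.1 * γ a s.2.2, a * s.2.1, s.2.2)
  map_one' := by
    funext s
    simp [Function.End.one_def, Af_one]
  map_mul' a a' := by
    funext s
    show _ = (fun s : X G₁ G₂ => (Af a s.1 * γ a s.2.2, a * s.2.1, s.2.2))
      ((fun s : X G₁ G₂ => (Af a' s.1 * γ a' s.2.2, a' * s.2.1, s.2.2)) s); beta_reduce
    refine Prod.ext ?_ (Prod.ext (by simp [mul_assoc]) rfl)
    simp only [Af_mul, MonoidHom.comp_apply, map_mul, Af_γ, mul_assoc, inv_mul_cancel_left,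
      inv_mul_cancel, mul_one]

/-- Left action of `G₂` on states. -/
noncomputable def LB : G₂ →* Function.End (X G₁ G₂) where
  toFun b := fun s => (Bf b s.1, s.2.1, b * s.2.2)
  map_one' := by
    funext s
    simp [Function.End.one_def, Bf_one]
  map_mul' b b' := by
    funext s
    show _ = (fun s : X G₁ G₂ => (Bf b s.1, s.2.1, b * s.2.2))
      ((fun s : X G₁ G₂ => (Bf b' s.1, s.2.1, b' * s.2.2)) s); beta_reduce
    exact Prod.ext (by simp [Bf_mul]) (Prod.ext rfl (by simp [mul_assoc]))

/-- The action of the coproduct on states. -/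
noncomputable def Φ : Coprod G₁ G₂ →* Function.End (X G₁ G₂) :=
  Coprod.lift LA LB

lemma Φ_inl (a : G₁) (s : X G₁ G₂) :
    Φ (Coprod.inl a) s = (Af a s.1 * γ a s.2.2, a * s.2.1, s.2.2) := by
  rw [Φ, Coprod.lift_apply_inl]; rfl

lemma Φ_inr (b : G₂) (s : X G₁ G₂) :
    Φ (Coprod.inr b) s = (Bf b s.1, s.2.1, b * s.2.2) := by
  rw [Φ, Coprod.lift_apply_inr]; rfl

lemma Φ_mul (w w' : Coprod G₁ G₂) (s : X G₁ G₂) :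
    Φ (w * w') s = Φ w (Φ w' s) := by
  rw [map_mul]; rfl

lemma ι_Af (g : G₁) (u : FreeGroup (S G₁ G₂)) :
    ι (Af g u) = Coprod.inl g * ι u * (Coprod.inl g)⁻¹ := by
  have : (ι.comp (Af g) : FreeGroup (S G₁ G₂) →* Coprod G₁ G₂) =
      ((MulAut.conj (Coprod.inl g : Coprod G₁ G₂)).toMonoidHom.comp ι) := by
    apply FreeGroup.ext_hom
    intro p
    simp only [MonoidHom.comp_apply, Af_of, map_mul, map_inv, ι_γ, MulEquiv.coe_toMonoidHom,
      MulAut.conj_apply]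
    rw [show ι (FreeGroup.of p) = ⁅(Coprod.inl p.1.1 : Coprod G₁ G₂), Coprod.inr p.1.2⁆ from
      FreeGroup.lift_apply_of]
    simp only [commutatorElement_def, map_mul]
    group
  have h := congrArg (fun f => f u) this
  simpa using h

lemma ι_Bf (h : G₂) (u : FreeGroup (S G₁ G₂)) :
    ι (Bf h u) = Coprod.inr h * ι u * (Coprod.inr h)⁻¹ := by
  have : (ι.comp (Bf h) : FreeGroup (S G₁ G₂) →* Coprod G₁ G₂) =
      ((MulAut.conj (Coprod.inr h : Coprod G₁ G₂)).toMonoidHom.comp ι) := by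
    apply FreeGroup.ext_hom
    intro p
    simp only [MonoidHom.comp_apply, Bf_of, map_mul, map_inv, ι_γ, MulEquiv.coe_toMonoidHom,
      MulAut.conj_apply]
    rw [show ι (FreeGroup.of p) = ⁅(Coprod.inl p.1.1 : Coprod G₁ G₂), Coprod.inr p.1.2⁆ from
      FreeGroup.lift_apply_of]
    simp only [commutatorElement_def, map_mul]
    group
  have h' := congrArg (fun f => f u) this
  simpa using h'

/-- KEY INVARIANT: the action computes the Schreier normal form. -/
lemma key (w : Coprod G₁ G₂) : ∀ u : FreeGroup (S G₁ G₂), ∀ g : G₁, ∀ h : G₂,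
    w * (ι u * Coprod.inr h * Coprod.inl g) =
      ι (Φ w (u, g, h)).1 * Coprod.inr (Φ w (u, g, h)).2.2 *
        Coprod.inl (Φ w (u, g, h)).2.1 := by
  induction w using Coprod.induction_on with
  | inl a =>
    intro u g h
    rw [Φ_inl]
    simp only [map_mul, ι_Af, ι_γ, commutatorElement_def]
    group
  | inr b =>
    intro u g h
    rw [Φ_inr]
    simp only [map_mul, ι_Bf]
    group
  | mul x y ihx ihy =>
    intro u g h
    rw [Φ_mul, mul_assoc, ihy u g h]
    have := ihx (Φ y (u, g, h)).1 (Φ y (u, g, h)).2.1 (Φ y (u, g, h)).2.2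
    rw [this]

/-- The main free-group computation: conjugation by a generator. -/
lemma conj_comp (x : G₁) (y : G₂) (v : FreeGroup (S G₁ G₂)) :
    Af x (Bf y (Af x⁻¹ (Bf y⁻¹ v))) = γ x y * v * (γ x y)⁻¹ := by
  have : ((Af x).comp ((Bf y).comp ((Af x⁻¹).comp (Bf y⁻¹))) :
      FreeGroup (S G₁ G₂) →* FreeGroup (S G₁ G₂)) =
      (MulAut.conj (γ x y : FreeGroup (S G₁ G₂))).toMonoidHom := by
    apply FreeGroup.ext_hom
    intro q
    simp only [MonoidHom.comp_apply, MulEquiv.coe_toMonoidHom, MulAut.conj_apply]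
    rw [Bf_of, ← γ_eq_of]
    simp only [map_mul, map_inv, Af_γ, Bf_γ, inv_mul_cancel, mul_inv_cancel,
      inv_mul_cancel_left, mul_inv_cancel_left, γ_one_left, γ_one_right,
      one_mul, mul_one, inv_one, mul_inv_rev, inv_inv]
    group
  have h := congrArg (fun f => f v) this
  simpa using h

lemma const_comp (x : G₁) (y : G₂) :
    Af x (Bf y (γ x⁻¹ y⁻¹ : FreeGroup (S G₁ G₂))) = γ x y := by
  rw [Bf_γ]
  simp only [map_mul, map_inv, Af_γ, mul_inv_cancel, inv_mul_cancel, γ_one_left,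
    γ_one_right, mul_one, one_mul, inv_one, inv_inv]

lemma act_of (p : S G₁ G₂) (v : FreeGroup (S G₁ G₂)) :
    Φ (ι (FreeGroup.of p)) (v, 1, 1) = (FreeGroup.of p * v, 1, 1) := by
  obtain ⟨⟨x, y⟩, hx, hy⟩ := p
  rw [show ι (FreeGroup.of (⟨(x, y), hx, hy⟩ : S G₁ G₂)) =
    ⁅(Coprod.inl x : Coprod G₁ G₂), Coprod.inr y⁆ from FreeGroup.lift_apply_of]
  have hinv1 : ((Coprod.inl x)⁻¹ : Coprod G₁ G₂) = Coprod.inl x⁻¹ :=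
    (map_inv (Coprod.inl : G₁ →* Coprod G₁ G₂) x).symm
  have hinv2 : ((Coprod.inr y)⁻¹ : Coprod G₁ G₂) = Coprod.inr y⁻¹ :=
    (map_inv (Coprod.inr : G₂ →* Coprod G₁ G₂) y).symm
  rw [commutatorElement_def, hinv1, hinv2]
  rw [Φ_mul, Φ_mul, Φ_mul, Φ_inr, Φ_inl, Φ_inr, Φ_inl]
  simp only [mul_one, one_mul, mul_inv_cancel, inv_mul_cancel, γ_one_right]
  refine Prod.ext ?_ rfl
  show Af x (Bf y (Af x⁻¹ (Bf y⁻¹ v) * γ x⁻¹ y⁻¹)) =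
    FreeGroup.of (⟨(x, y), hx, hy⟩ : S G₁ G₂) * v
  rw [map_mul, map_mul, conj_comp, const_comp, inv_mul_cancel_right, γ_def hx hy]

lemma act_ι (u : FreeGroup (S G₁ G₂)) :
    ∀ v : FreeGroup (S G₁ G₂), Φ (ι u) (v, 1, 1) = (u * v, 1, 1) := by
  induction u using FreeGroup.induction_on with
  | C1 => intro v; simp only [map_one, one_mul]; rfl
  | of p => exact act_of p
  | inv_of p hp =>
    intro v
    show Φ (ι (FreeGroup.of p)⁻¹) (v, 1, 1) = ((FreeGroup.of p)⁻¹ * v, 1, 1)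
    have hp' : ∀ v, Φ (ι (FreeGroup.of p)) (v, 1, 1) = (FreeGroup.of p * v, 1, 1) := hp
    have hcancel : ∀ s : X G₁ G₂,
        Φ (ι (FreeGroup.of p)) (Φ (ι (FreeGroup.of p)⁻¹) s) = s := by
      intro s
      rw [← Φ_mul, ← map_mul, mul_inv_cancel, map_one]; rfl
    have hinj : Function.Injective (Φ (ι (FreeGroup.of p))) :=
      Function.LeftInverse.injective
        (g := Φ (ι (FreeGroup.of p)⁻¹)) (fun s => by
          rw [← Φ_mul, ← map_mul, inv_mul_cancel, map_one]; rfl)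
    apply hinj
    rw [hcancel, hp' ((FreeGroup.of p)⁻¹ * v), mul_inv_cancel_left]
  | mul u₁ u₂ h1 h2 =>
    intro v
    rw [map_mul, Φ_mul, h2, h1, mul_assoc]

lemma ι_injective : Function.Injective (ι : FreeGroup (S G₁ G₂) →* Coprod G₁ G₂) := by
  intro u u' h
  have h1 := act_ι u 1
  rw [h, act_ι u' 1] at h1
  simpa using (Prod.ext_iff.mp h1).1.symm

/-- The projection. -/
noncomputable def π' : Coprod G₁ G₂ →* G₁ × G₂ :=
  Coprod.lift (MonoidHom.inl G₁ G₂) (MonoidHom.inr G₁ G₂)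

lemma π'_ι (u : FreeGroup (S G₁ G₂)) : π' (ι u) = 1 := by
  have : (π'.comp ι : FreeGroup (S G₁ G₂) →* G₁ × G₂) = 1 := by
    apply FreeGroup.ext_hom
    intro p
    rw [MonoidHom.comp_apply,
      show ι (FreeGroup.of p) = ⁅(Coprod.inl p.1.1 : Coprod G₁ G₂), Coprod.inr p.1.2⁆ from
        FreeGroup.lift_apply_of]
    simp only [commutatorElement_def, map_mul, map_inv, π', Coprod.lift_apply_inl,
      Coprod.lift_apply_inr, MonoidHom.inl_apply, MonoidHom.inr_apply, MonoidHom.one_apply]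
    simp [Prod.ext_iff]
  have h := congrArg (fun f => f u) this
  simpa using h

lemma range_ι :
    (ι : FreeGroup (S G₁ G₂) →* Coprod G₁ G₂).range = (π' : Coprod G₁ G₂ →* G₁ × G₂).ker := by
  ext w
  constructor
  · rintro ⟨u, rfl⟩
    exact π'_ι u
  · intro hw
    have hk := key w 1 1 1
    simp only [map_one, one_mul, mul_one] at hk
    set s := Φ w ((1 : FreeGroup (S G₁ G₂)), (1 : G₁), (1 : G₂)) with hs
    have hπ : π' w = (s.2.1, s.2.2) := by
      rw [hk, map_mul, map_mul, π'_ι]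
      simp [π', Prod.ext_iff]
    rw [MonoidHom.mem_ker] at hw
    rw [hw] at hπ
    have h21 : s.2.1 = 1 := (Prod.ext_iff.mp hπ.symm).1
    have h22 : s.2.2 = 1 := (Prod.ext_iff.mp hπ.symm).2
    refine ⟨s.1, ?_⟩
    rw [hk, h21, h22, map_one, map_one, mul_one, mul_one]

end CartesianAux

/-- The kernel of the natural surjection from the free product `G₁ ∗ G₂`
onto the direct product `G₁ × G₂` (the Cartesian subgroup) is a free group, freely
generated by the commutators `⁅g₁, g₂⁆` with `g₁ ∈ G₁ \ {1}`, `g₂ ∈ G₂ \ {1}`: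
the canonical homomorphism from the free group on this set of commutators into
`G₁ ∗ G₂` is injective with image exactly this kernel. -/
theorem cartesian_subgroup_free
    {G₁ G₂ : Type*} [Group G₁] [Group G₂] :
    letI π : Coprod G₁ G₂ →* G₁ × G₂ :=
      Coprod.lift (MonoidHom.inl G₁ G₂) (MonoidHom.inr G₁ G₂)
    letI T : Set (Coprod G₁ G₂) :=
      {x | ∃ g₁ : G₁, ∃ g₂ : G₂, g₁ ≠ 1 ∧ g₂ ≠ 1 ∧ x = ⁅(Coprod.inl g₁ : Coprod G₁ G₂), Coprod.inr g₂⁆}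
    Function.Injective (FreeGroup.lift (Subtype.val : T → Coprod G₁ G₂)) ∧
      (FreeGroup.lift (Subtype.val : T → Coprod G₁ G₂)).range = π.ker := by
  classical
  let T : Set (Coprod G₁ G₂) :=
    {x | ∃ g₁ : G₁, ∃ g₂ : G₂, g₁ ≠ 1 ∧ g₂ ≠ 1 ∧
      x = ⁅(Coprod.inl g₁ : Coprod G₁ G₂), Coprod.inr g₂⁆}
  show Function.Injective (FreeGroup.lift (Subtype.val : T → Coprod G₁ G₂)) ∧
      (FreeGroup.lift (Subtype.val : T → Coprod G₁ G₂)).range =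
        (Coprod.lift (MonoidHom.inl G₁ G₂) (MonoidHom.inr G₁ G₂)).ker
  set L := FreeGroup.lift (Subtype.val : T → Coprod G₁ G₂) with hL
  -- the comparison map from the subtype of pairs
  let c : CartesianAux.S G₁ G₂ → T := fun p =>
    ⟨⁅(Coprod.inl p.1.1 : Coprod G₁ G₂), Coprod.inr p.1.2⁆, p.1.1, p.1.2, p.2.1, p.2.2, rfl⟩
  have hLc : ∀ u : FreeGroup (CartesianAux.S G₁ G₂),
      L (FreeGroup.map c u) = CartesianAux.ι u := by
    have : (L.comp (FreeGroup.map c) :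
        FreeGroup (CartesianAux.S G₁ G₂) →* Coprod G₁ G₂) = CartesianAux.ι := by
      apply FreeGroup.ext_hom
      intro p
      rw [MonoidHom.comp_apply, FreeGroup.map.of]
      rw [show L (FreeGroup.of (c p)) = (c p).val from FreeGroup.lift_apply_of]
      exact (FreeGroup.lift_apply_of).symm
    intro u
    have h := congrArg (fun f => f u) this
    simpa using h
  have hcinj : Function.Injective c := by
    intro p p' hpp
    have : CartesianAux.ι (FreeGroup.of p) = CartesianAux.ι (FreeGroup.of p') := by
      rw [← hLc, ← hLc, FreeGroup.map.of, FreeGroup.map.of, hpp]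
    exact Subtype.val_injective (Prod.ext_iff.mpr (by
      have := FreeGroup.of_injective (CartesianAux.ι_injective this)
      exact ⟨congrArg (fun q => q.1.1) this, congrArg (fun q => q.1.2) this⟩))
  have hcsurj : Function.Surjective c := by
    rintro ⟨t, a, b, ha, hb, rfl⟩
    exact ⟨⟨(a, b), ha, hb⟩, rfl⟩
  let e : CartesianAux.S G₁ G₂ ≃ T := Equiv.ofBijective c ⟨hcinj, hcsurj⟩
  let E : FreeGroup (CartesianAux.S G₁ G₂) ≃* FreeGroup T := FreeGroup.freeGroupCongr e
  have hLE : ∀ u, L (E u) = CartesianAux.ι u := by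
    intro u
    have : (E u : FreeGroup T) = FreeGroup.map c u := rfl
    rw [this, hLc]
  have hLval : ∀ v : FreeGroup T, L v = CartesianAux.ι (E.symm v) := by
    intro v
    rw [← hLE (E.symm v), MulEquiv.apply_symm_apply]
  constructor
  · intro v v' hvv
    rw [hLval, hLval] at hvv
    have := CartesianAux.ι_injective hvv
    exact E.symm.injective this
  · rw [show (Coprod.lift (MonoidHom.inl G₁ G₂) (MonoidHom.inr G₁ G₂))
        = (CartesianAux.π' : Coprod G₁ G₂ →* G₁ × G₂) from rfl,
      ← CartesianAux.range_ι]
    ext w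
    constructor
    · rintro ⟨v, rfl⟩
      exact ⟨E.symm v, (hLval v).symm⟩
    · rintro ⟨u, rfl⟩
      exact ⟨E u, hLE u⟩
end
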